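/- In the binary classification setting, with e^B the majority-vote error rate and e^a the average error rate of N classifiers on m examples, one has the lower bound e^B ≥ (N/⌊N/2+1⌋)·e^a − (N/⌊N/2+1⌋ − 1), and hence e^B ≥ e^a − 1/2 when N/⌊N/2+1⌋ ≥ 1. -/

import Mathlib

open Finset

/-- In binary classification, the majority-vote error rate `e^B` satisfies the lower bound
`e^B ≥ (N/⌊N/2+1⌋) e^a − (N/⌊N/2+1⌋ − 1)`, and hence `e^B ≥ e^a − 1/2` when
`N/⌊N/2+1⌋ ≥ 1`. -/
theorem majority_vote_error_lower_bound
    (m N : ℕ) (hm : 0 < m) (hN : 0 < N)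
    (ε : Fin m → Fin N → ℕ) (hε : ∀ i j, ε i j ≤ 1)
    (eB ea : ℝ)
    (heB : eB = ((Finset.univ.filter
        (fun i : Fin m => (N - 1) / 2 + 1 ≤ ∑ j, ε i j)).card : ℝ) / m)
    (hea : ea = (∑ i, ∑ j, (ε i j : ℝ)) / (N * m)) :
    eB ≥ ((N : ℝ) / (N / 2 + 1 : ℕ)) * ea - ((N : ℝ) / (N / 2 + 1 : ℕ) - 1) ∧
    ((1 : ℝ) ≤ (N : ℝ) / (N / 2 + 1 : ℕ) → eB ≥ ea - 1 / 2) := by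
  classical
  set k : ℕ := N / 2 + 1 with hkdef
  set S : Finset (Fin m) := Finset.univ.filter
      (fun i : Fin m => (N - 1) / 2 + 1 ≤ ∑ j, ε i j) with hS
  set c : ℕ := S.card with hc
  have hcm : c ≤ m := by
    simpa using Finset.card_le_univ S
  have hkN : k ≤ N := by omega
  have hk2 : N < 2 * k := by omega
  -- nat bound on the total sum
  have hsumS : ∀ i ∈ S, ∑ j, ε i j ≤ N := by
    intro i _
    calc ∑ j, ε i j ≤ ∑ _j : Fin N, 1 := Finset.sum_le_sum (fun j _ => hε i j)
    _ = N := by simp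
  have hsumSc : ∀ i ∈ Sᶜ, ∑ j, ε i j ≤ N - k := by
    intro i hi
    have : ¬ ((N - 1) / 2 + 1 ≤ ∑ j, ε i j) := by
      simpa [hS] using hi
    omega
  have hkey : (∑ i, ∑ j, ε i j) ≤ c * N + (m - c) * (N - k) := by
    rw [← Finset.sum_add_sum_compl S]
    have h1 : ∑ i ∈ S, ∑ j, ε i j ≤ c * N := by
      calc ∑ i ∈ S, ∑ j, ε i j ≤ ∑ _i ∈ S, N := Finset.sum_le_sum hsumS
      _ = c * N := by simp [hc, mul_comm]
    have h2 : ∑ i ∈ Sᶜ, ∑ j, ε i j ≤ (m - c) * (N - k) := by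
      calc ∑ i ∈ Sᶜ, ∑ j, ε i j ≤ ∑ _i ∈ Sᶜ, (N - k) := Finset.sum_le_sum hsumSc
      _ = (m - c) * (N - k) := by
          simp [Finset.card_compl, hc]
    omega
  -- real versions
  have hmR : (0:ℝ) < m := by exact_mod_cast hm
  have hNR : (0:ℝ) < N := by exact_mod_cast hN
  have hkR : (0:ℝ) < k := by positivity
  have hTcast : (∑ i, ∑ j, (ε i j : ℝ)) = ((∑ i, ∑ j, ε i j : ℕ) : ℝ) := by
    push_cast; rfl
  have hkeyR : (∑ i, ∑ j, (ε i j : ℝ)) ≤ (c:ℝ) * k + ((N:ℝ) - k) * m := by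
    rw [hTcast]
    have := (Nat.cast_le (α := ℝ)).2 hkey
    have hsub1 : ((m - c : ℕ) : ℝ) = (m:ℝ) - c := by
      push_cast [Nat.cast_sub hcm]; ring
    have hsub2 : ((N - k : ℕ) : ℝ) = (N:ℝ) - k := by
      push_cast [Nat.cast_sub hkN]; ring
    rw [Nat.cast_add, Nat.cast_mul, Nat.cast_mul, hsub1, hsub2] at this
    nlinarith [this]
  have hT1 : (∑ i, ∑ j, (ε i j : ℝ)) ≤ (N:ℝ) * m := by
    calc (∑ i, ∑ j, (ε i j : ℝ)) ≤ ∑ _i : Fin m, ∑ _j : Fin N, (1:ℝ) := by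
          apply Finset.sum_le_sum; intro i _
          apply Finset.sum_le_sum; intro j _
          exact_mod_cast hε i j
    _ = (N:ℝ) * m := by simp [mul_comm]
  have hea1 : ea ≤ 1 := by
    rw [hea, div_le_one (by positivity)]
    exact hT1
  have part1 : eB ≥ ((N : ℝ) / k) * ea - ((N : ℝ) / k - 1) := by
    rw [ge_iff_le, heB, hea]
    have e1 : (N:ℝ)/k * ((∑ i, ∑ j, (ε i j : ℝ))/(N*m))
        = (∑ i, ∑ j, (ε i j : ℝ)) / (k*m) := by
      field_simp
    rw [e1, sub_le_iff_le_add, div_le_iff₀ (by positivity : (0:ℝ) < (k:ℝ)*m)]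
    have e2 : ((c:ℝ)/m + ((N:ℝ)/k - 1)) * ((k:ℝ)*m)
        = (c:ℝ)*k + ((N:ℝ) - k)*m := by
      field_simp
    rw [e2]
    exact hkeyR
  refine ⟨part1, ?_⟩
  intro h1
  have heB0 : 0 ≤ eB := by rw [heB]; positivity
  by_cases hcase : ea ≤ 1/2
  · linarith
  · have hk2R : (N:ℝ) < 2 * k := by exact_mod_cast hk2
    have hNk2 : (N:ℝ)/k < 2 := by
      rw [div_lt_iff₀ hkR]; linarith
    nlinarith [part1, hea1, h1, hNk2]
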